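/- Let b : ℝ → ℝ be locally Lipschitz, nonnegative and nondecreasing, let t₀ ∈ ℝ and α, β > 0, and set T(α,β) := ∫_α^∞ ds / (β² + 2∫_α^s b(r) dr)^{1/2} (with the convention 1/0 = ∞). Then for every T₁ with 0 < T₁ < T(α,β) there exists a continuous function y : [t₀, t₀ + T₁] → ℝ satisfying y(t) = α + β(t − t₀) + ∫_{t₀}^t (t − s) b(y(s)) ds for all t ∈ [t₀, t₀ + T₁]. -/

import Mathlib

open MeasureTheory Set

/-- `T(α,β) = ∫_α^∞ ds / (β² + 2∫_α^s b(r) dr)^{1/2}`, valued in `[0,∞]`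
(with the convention `1/0 = ∞`, which is irrelevant here since the integrand's
denominator is positive when `β > 0`). -/
noncomputable def blowupTime (b : ℝ → ℝ) (α β : ℝ) : ENNReal :=
  ∫⁻ s in Set.Ioi α, ENNReal.ofReal (1 / Real.sqrt (β ^ 2 + 2 * ∫ r in α..s, b r))

section Aux

/-- `B x = ∫_α^x b`. -/
noncomputable def auxB (b : ℝ → ℝ) (α : ℝ) (x : ℝ) : ℝ := ∫ r in α..x, b r

/-- `g x = sqrt (β² + 2 B x)`. -/
noncomputable def auxg (b : ℝ → ℝ) (α β : ℝ) (x : ℝ) : ℝ :=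
  Real.sqrt (β ^ 2 + 2 * auxB b α x)

/-- The "time map" `F x = ∫_α^x 1/g`. -/
noncomputable def auxF (b : ℝ → ℝ) (α β : ℝ) (x : ℝ) : ℝ :=
  ∫ s in α..x, (auxg b α β s)⁻¹

/-- Inverse of the time map. -/
noncomputable def auxh (b : ℝ → ℝ) (α β c x₁ : ℝ) (v : ℝ) : ℝ :=
  sSup (insert c {x | x ∈ Set.Icc c x₁ ∧ auxF b α β x ≤ v})

/-- Monotone-limit step: a lower bound strictly below `∫⁻` over `Ioi α` is beaten
on some bounded `Ioc`. -/
theorem aux_exists_Ioc (f : ℝ → ENNReal) (hf : Measurable f) (α : ℝ) (T : ENNReal)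
    (h : T < ∫⁻ s in Set.Ioi α, f s) :
    ∃ n : ℕ, T < ∫⁻ s in Set.Ioc α (α + n), f s := by
  have key : (∫⁻ s in Set.Ioi α, f s) = ⨆ n : ℕ, ∫⁻ s in Set.Ioc α (α + n), f s := by
    have h2 : (∫⁻ s in Set.Ioi α, f s) = ∫⁻ s, (Set.Ioi α).indicator f s :=
      (lintegral_indicator measurableSet_Ioi f).symm
    have h3 : ∀ x, (Set.Ioi α).indicator f x
        = ⨆ n : ℕ, (Set.Ioc α (α + (n : ℝ))).indicator f x := by
      intro x
      by_cases hx : α < x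
      · obtain ⟨n, hn⟩ := exists_nat_ge (x - α)
        rw [Set.indicator_of_mem (Set.mem_Ioi.2 hx)]
        refine le_antisymm ?_ ?_
        · exact le_iSup_of_le n
            (le_of_eq (Set.indicator_of_mem (Set.mem_Ioc.2 ⟨hx, by linarith⟩) f).symm)
        · refine iSup_le fun n => ?_
          by_cases hxn : x ∈ Set.Ioc α (α + (n : ℝ))
          · rw [Set.indicator_of_mem hxn f]
          · rw [Set.indicator_of_notMem hxn f]; exact zero_le
      · rw [Set.indicator_of_notMem (fun hmem : x ∈ Set.Ioi α => hx hmem) f]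
        refine le_antisymm zero_le (iSup_le fun n => ?_)
        rw [Set.indicator_of_notMem (fun hmem : x ∈ Set.Ioc α (α + (n:ℝ)) => hx hmem.1) f]
    have h4 : Monotone fun n : ℕ => (Set.Ioc α (α + (n : ℝ))).indicator f := by
      intro m n hmn x
      dsimp only
      by_cases hx : x ∈ Set.Ioc α (α + (m : ℝ))
      · rw [Set.indicator_of_mem hx, Set.indicator_of_mem
          (Set.mem_Ioc.2 ⟨hx.1, hx.2.trans (by linarith [(Nat.cast_le (α := ℝ)).2 hmn])⟩)]
      · rw [Set.indicator_of_notMem hx]; exact zero_le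
    calc (∫⁻ s in Set.Ioi α, f s)
        = ∫⁻ s, ⨆ n : ℕ, (Set.Ioc α (α + (n : ℝ))).indicator f s := by
          rw [h2]; exact lintegral_congr h3
      _ = ⨆ n : ℕ, ∫⁻ s, (Set.Ioc α (α + (n : ℝ))).indicator f s :=
          lintegral_iSup (fun n => hf.indicator measurableSet_Ioc) h4
      _ = ⨆ n : ℕ, ∫⁻ s in Set.Ioc α (α + (n : ℝ)), f s := by
          simp [lintegral_indicator measurableSet_Ioc]
  rw [key] at h
  exact lt_iSup_iff.mp h

end Aux

/-- For every `T₁ < T(α,β)` the integral equation has a continuous solution on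
`[t₀, t₀ + T₁]`. -/
theorem exists_solution_of_lt_blowupTime (b : ℝ → ℝ) (hb : LocallyLipschitz b)
    (hb_nonneg : ∀ x, 0 ≤ b x) (hb_mono : Monotone b)
    (t₀ α β T₁ : ℝ) (hα : 0 < α) (hβ : 0 < β) (hT₁ : 0 < T₁)
    (hT₁_lt : ENNReal.ofReal T₁ < blowupTime b α β) :
    ∃ y : ℝ → ℝ, ContinuousOn y (Set.Icc t₀ (t₀ + T₁)) ∧
      ∀ t ∈ Set.Icc t₀ (t₀ + T₁),
        y t = α + β * (t - t₀) + ∫ s in t₀..t, (t - s) * b (y s) := by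
  have hb_cont : Continuous b := hb.continuous
  set B : ℝ → ℝ := auxB b α with hB_def
  set g : ℝ → ℝ := auxg b α β with hg_def
  set F : ℝ → ℝ := auxF b α β with hF_def
  have hB_deriv : ∀ x : ℝ, HasDerivAt B (b x) x := fun x =>
    (hb_cont.integral_hasStrictDerivAt α x).hasDerivAt
  have hB_cont : Continuous B := continuous_iff_continuousAt.2 fun x => (hB_deriv x).continuousAt
  have hB_α : B α = 0 := intervalIntegral.integral_same
  -- constants
  set M : ℝ := b α with hM_def
  have hM : 0 ≤ M := hb_nonneg α
  set δ : ℝ := β ^ 2 / (4 * (M + 1)) with hδ_def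
  have hδ_pos : 0 < δ := div_pos (pow_pos hβ 2) (by linarith)
  set c : ℝ := α - δ with hc_def
  have hcα : c < α := by rw [hc_def]; linarith
  have hB_nonneg : ∀ x, α ≤ x → 0 ≤ B x := fun x hx =>
    intervalIntegral.integral_nonneg hx fun r _ => hb_nonneg r
  have hB_lower : ∀ x, c ≤ x → x ≤ α → -(β ^ 2 / 4) ≤ B x := by
    intro x hcx hxα
    have h1 : B x = -∫ r in x..α, b r := by
      rw [hB_def, auxB, intervalIntegral.integral_symm]
    have h2 : (∫ r in x..α, b r) ≤ ∫ r in x..α, M := by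
      refine intervalIntegral.integral_mono_on hxα (hb_cont.intervalIntegrable _ _)
        intervalIntegrable_const fun r hr => hb_mono hr.2
    have h3 : (∫ r in x..α, (M : ℝ)) = (α - x) * M := by simp [mul_comm]
    have h4 : (α - x) * M ≤ δ * M := by
      have : α - x ≤ δ := by rw [hc_def] at hcx; linarith
      nlinarith
    have h5 : δ * (M + 1) = β ^ 2 / 4 := by
      rw [hδ_def]; field_simp
    nlinarith
  have hpos : ∀ x, c ≤ x → β ^ 2 / 2 ≤ β ^ 2 + 2 * B x := by
    intro x hx
    rcases le_total x α with hxα | hαx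
    · have := hB_lower x hx hxα; nlinarith
    · have := hB_nonneg x hαx; nlinarith
  have hβ2 : (0 : ℝ) < β ^ 2 / 2 := by positivity
  have hg_cont : Continuous g := by
    rw [hg_def]
    exact Real.continuous_sqrt.comp (continuous_const.add (continuous_const.mul hB_cont))
  have hg_pos : ∀ x, c ≤ x → 0 < g x := fun x hx =>
    Real.sqrt_pos.2 (lt_of_lt_of_le hβ2 (hpos x hx))
  have hg_α : g α = β := by
    rw [hg_def, auxg, show auxB b α α = (0:ℝ) from intervalIntegral.integral_same]
    simp [Real.sqrt_sq hβ.le]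
  have hg_deriv : ∀ x, c ≤ x → HasDerivAt g (b x / g x) x := by
    intro x hx
    have h1 : HasDerivAt (fun x => β ^ 2 + 2 * B x) (2 * b x) x :=
      ((hB_deriv x).const_mul 2).const_add (β ^ 2)
    have hne : β ^ 2 + 2 * B x ≠ 0 := by have := hpos x hx; nlinarith
    have h2 := h1.sqrt hne
    have : (2 * b x) / (2 * Real.sqrt (β ^ 2 + 2 * B x)) = b x / g x := by
      rw [hg_def, auxg, mul_div_mul_left _ _ (two_ne_zero)]
    rwa [this] at h2
  -- the time map F
  have hginv_contOn : ContinuousOn (fun s => (g s)⁻¹) (Set.Ici c) :=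
    hg_cont.continuousOn.inv₀ fun x hx => (hg_pos x hx).ne'
  have hginv_meas : Measurable fun s => (g s)⁻¹ := hg_cont.measurable.inv
  have hF_deriv : ∀ x, c ≤ x → HasDerivAt F (g x)⁻¹ x := by
    intro x hx
    refine intervalIntegral.integral_hasDerivAt_right ?_
      hginv_meas.stronglyMeasurable.stronglyMeasurableAtFilter
      (hg_cont.continuousAt.inv₀ (hg_pos x hx).ne')
    exact (hginv_contOn.mono fun s hs => le_trans (le_inf hcα.le hx) hs.1).intervalIntegrable
  have hF_contOn : ContinuousOn F (Set.Ici c) := fun x hx =>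
    (hF_deriv x hx).continuousAt.continuousWithinAt
  have hF_mono : StrictMonoOn F (Set.Ici c) := by
    refine strictMonoOn_of_deriv_pos (convex_Ici c) hF_contOn fun x hx => ?_
    rw [interior_Ici] at hx
    rw [(hF_deriv x hx.le).deriv]
    exact inv_pos.2 (hg_pos x hx.le)
  have hF_α : F α = 0 := intervalIntegral.integral_same
  have hF_c_neg : F c < 0 := by
    have hpos' : 0 < ∫ s in c..α, (g s)⁻¹ := by
      refine intervalIntegral.intervalIntegral_pos_of_pos_on ?_
        (fun s hs => inv_pos.2 (hg_pos s hs.1.le)) hcα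
      exact (hginv_contOn.mono fun s hs => le_trans (le_inf le_rfl hcα.le) hs.1).intervalIntegrable
    have : F c = -∫ s in c..α, (g s)⁻¹ := by
      rw [hF_def, auxF, intervalIntegral.integral_symm]
    linarith
  -- find x₁ with T₁ < F x₁
  have hbl : blowupTime b α β = ∫⁻ s in Set.Ioi α, ENNReal.ofReal ((g s)⁻¹) := by
    simp only [blowupTime, hg_def, auxg, hB_def, auxB, one_div]
  obtain ⟨n, hn⟩ := aux_exists_Ioc (fun s => ENNReal.ofReal ((g s)⁻¹))
    (hginv_meas.ennreal_ofReal) α (ENNReal.ofReal T₁) (hbl ▸ hT₁_lt)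
  set x₁ : ℝ := α + n with hx₁_def
  have hαx₁ : α ≤ x₁ := by rw [hx₁_def]; linarith [Nat.cast_nonneg' (α := ℝ) n]
  have hcx₁ : c ≤ x₁ := hcα.le.trans hαx₁
  have hT₁F : T₁ < F x₁ := by
    have hint : IntegrableOn (fun s => (g s)⁻¹) (Set.Ioc α x₁) := by
      refine ((hginv_contOn.mono ?_).integrableOn_Icc).mono_set Set.Ioc_subset_Icc_self
      exact fun s hs => hcα.le.trans hs.1
    have heq : (∫⁻ s in Set.Ioc α x₁, ENNReal.ofReal ((g s)⁻¹)) = ENNReal.ofReal (F x₁) := by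
      rw [hF_def, auxF, intervalIntegral.integral_of_le hαx₁]
      exact (ofReal_integral_eq_lintegral_ofReal hint
        (Filter.Eventually.of_forall fun s => inv_nonneg.2 (Real.sqrt_nonneg _))).symm
    rw [heq] at hn
    exact (ENNReal.ofReal_lt_ofReal_iff_of_nonneg hT₁.le).1 hn
  -- the inverse map h
  set h : ℝ → ℝ := auxh b α β c x₁ with hh_def
  have h_bdd : ∀ v : ℝ, BddAbove (insert c {x | x ∈ Set.Icc c x₁ ∧ F x ≤ v}) := by
    intro v
    refine ⟨x₁, ?_⟩
    rintro z (rfl | ⟨hz, _⟩)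
    · exact hcx₁
    · exact hz.2
  have h_mono : Monotone h := by
    intro u v huv
    rw [hh_def, auxh]
    refine csSup_le_csSup (h_bdd v) ⟨c, Set.mem_insert _ _⟩ ?_
    exact Set.insert_subset_insert fun x hx => ⟨hx.1, hx.2.trans huv⟩
  have key : ∀ v ∈ Set.Icc (F c) (F x₁), F (h v) = v ∧ h v ∈ Set.Icc c x₁ := by
    intro v hv
    obtain ⟨x, hxK, hFx⟩ := intermediate_value_Icc hcx₁
      (hF_contOn.mono (Set.Icc_subset_Ici_self)) hv
    have hhx : h v = x := by
      rw [hh_def, auxh]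
      refine le_antisymm (csSup_le ⟨c, Set.mem_insert _ _⟩ ?_) (le_csSup (h_bdd v) ?_)
      · rintro z (rfl | ⟨hzK, hzF⟩)
        · exact hxK.1
        · by_contra hzx
          push_neg at hzx
          have hlt : F x < F z := hF_mono hxK.1 hzK.1 hzx
          rw [hFx] at hlt
          exact absurd hzF (not_le.2 hlt)
      · exact Set.mem_insert_iff.2 (Or.inr ⟨hxK, le_of_eq hFx⟩)
    exact ⟨by rw [hhx, hFx], by rw [hhx]; exact hxK⟩
  have hFcx₁ : F c ≤ F x₁ := by linarith
  have h_left_inv : ∀ x ∈ Set.Icc c x₁, h (F x) = x := by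
    intro x hx
    have hv : F x ∈ Set.Icc (F c) (F x₁) :=
      ⟨hF_mono.monotoneOn Set.self_mem_Ici hx.1 hx.1,
       hF_mono.monotoneOn hx.1 hcx₁ hx.2⟩
    obtain ⟨hFh, hmem⟩ := key _ hv
    exact hF_mono.injOn hmem.1 hx.1 hFh
  have hh0 : h 0 = α := by
    have := h_left_inv α ⟨hcα.le, hαx₁⟩
    rwa [hF_α] at this
  have h_strict : StrictMonoOn h (Set.Icc (F c) (F x₁)) := by
    intro u hu v hv huv
    by_contra hle
    push_neg at hle
    have h1 : F (h v) ≤ F (h u) :=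
      hF_mono.monotoneOn (key v hv).2.1 (key u hu).2.1 hle
    rw [(key u hu).1, (key v hv).1] at h1
    exact absurd h1 (not_le.2 huv)
  have h_mem_Ioo : ∀ v ∈ Set.Ioo (F c) (F x₁), h v ∈ Set.Ioo c x₁ := by
    intro v hv
    have hvIcc : v ∈ Set.Icc (F c) (F x₁) := ⟨hv.1.le, hv.2.le⟩
    constructor
    · have := h_strict ⟨le_rfl, hFcx₁⟩ hvIcc hv.1
      rwa [h_left_inv c ⟨le_rfl, hcx₁⟩] at this
    · have := h_strict hvIcc ⟨hFcx₁, le_rfl⟩ hv.2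
      rwa [h_left_inv x₁ ⟨hcx₁, le_rfl⟩] at this
  have h_contAt : ∀ v ∈ Set.Ioo (F c) (F x₁), ContinuousAt h v := by
    intro v hv
    refine h_strict.continuousAt_of_image_mem_nhds (Icc_mem_nhds hv.1 hv.2) ?_
    refine Filter.mem_of_superset
      (Ioo_mem_nhds (h_mem_Ioo v hv).1 (h_mem_Ioo v hv).2) ?_
    intro x hx
    exact ⟨F x,
      ⟨hF_mono.monotoneOn Set.self_mem_Ici hx.1.le hx.1.le,
       hF_mono.monotoneOn hx.1.le hcx₁ hx.2.le⟩,
      h_left_inv x ⟨hx.1.le, hx.2.le⟩⟩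
  -- the solution
  set y : ℝ → ℝ := fun t => h (t - t₀) with hy_def
  set I : Set ℝ := Set.Ioo (t₀ + F c) (t₀ + F x₁) with hI_def
  have hI_open : IsOpen I := isOpen_Ioo
  have hIccI : Set.Icc t₀ (t₀ + T₁) ⊆ I := fun t ht =>
    ⟨by linarith [ht.1], by linarith [ht.2]⟩
  have ht₀I : t₀ ∈ I := hIccI ⟨le_rfl, by linarith⟩
  have hsub : ∀ t ∈ I, t - t₀ ∈ Set.Ioo (F c) (F x₁) := fun t ht =>
    ⟨by linarith [ht.1], by linarith [ht.2]⟩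
  have hy_mem : ∀ t ∈ I, y t ∈ Set.Ioo c x₁ := fun t ht => h_mem_Ioo _ (hsub t ht)
  have hy_contAt : ∀ t ∈ I, ContinuousAt y t := by
    intro t ht
    have h1 : ContinuousAt (fun s : ℝ => s - t₀) t :=
      (continuous_id.sub continuous_const).continuousAt
    have h2 : ContinuousAt (h ∘ fun s : ℝ => s - t₀) t :=
      ContinuousAt.comp (h_contAt _ (hsub t ht)) h1
    exact h2
  have hy_t₀ : y t₀ = α := by
    rw [hy_def]
    simp only [sub_self]
    exact hh0
  have hy_deriv : ∀ t ∈ I, HasDerivAt y (g (y t)) t := by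
    intro t ht
    have hyc : c ≤ y t := (hy_mem t ht).1.le
    have hfd : HasDerivAt (fun x => t₀ + F x) (g (y t))⁻¹ (y t) :=
      (hF_deriv _ hyc).const_add t₀
    have hfg : ∀ᶠ s in nhds t, (fun x => t₀ + F x) (y s) = s := by
      filter_upwards [hI_open.mem_nhds ht] with s hs
      have hFh : F (h (s - t₀)) = s - t₀ :=
        (key _ ⟨(hsub s hs).1.le, (hsub s hs).2.le⟩).1
      simp only [hy_def]
      rw [hFh]
      ring
    have := HasDerivAt.of_local_left_inverse (hy_contAt t ht) hfd
      (inv_ne_zero (hg_pos _ hyc).ne') hfg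
    rwa [inv_inv] at this
  -- measurability and integrability of s ↦ b (y s)
  have hy_meas : Measurable y := h_mono.measurable.comp (measurable_id.sub measurable_const)
  have hbb_meas : Measurable fun s => b (y s) := hb_cont.measurable.comp hy_meas
  have hbb_contAt : ∀ s ∈ I, ContinuousAt (fun s => b (y s)) s := fun s hs =>
    hb_cont.continuousAt.comp (hy_contAt s hs)
  have hI_ord : ∀ u ∈ I, ∀ v ∈ I, Set.uIcc u v ⊆ I := fun u hu v hv =>
    Set.ordConnected_Ioo.uIcc_subset hu hv
  have hbb_contOn : ContinuousOn (fun s => b (y s)) I := fun s hs =>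
    (hbb_contAt s hs).continuousWithinAt
  have hbb_int : ∀ s ∈ I, IntervalIntegrable (fun r => b (y r)) volume t₀ s := fun s hs =>
    (hbb_contOn.mono (hI_ord t₀ ht₀I s hs)).intervalIntegrable
  have hsbb_int : ∀ s ∈ I, IntervalIntegrable (fun r => r * b (y r)) volume t₀ s := fun s hs =>
    ((continuousOn_id.mul hbb_contOn).mono (hI_ord t₀ ht₀I s hs)).intervalIntegrable
  set w : ℝ → ℝ := fun t => β + ∫ s in t₀..t, b (y s) with hw_def
  have hint_deriv : ∀ t ∈ I, HasDerivAt (fun u => ∫ s in t₀..u, b (y s)) (b (y t)) t :=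
    fun t ht => intervalIntegral.integral_hasDerivAt_right (hbb_int t ht)
      hbb_meas.stronglyMeasurable.stronglyMeasurableAtFilter (hbb_contAt t ht)
  have hw_deriv : ∀ t ∈ I, HasDerivAt w (b (y t)) t := fun t ht =>
    (hint_deriv t ht).const_add β
  have hgy_deriv : ∀ s ∈ I, HasDerivAt (fun u => g (y u)) (b (y s)) s := by
    intro s hs
    have h1 := (hg_deriv (y s) (hy_mem s hs).1.le).comp s (hy_deriv s hs)
    rwa [div_mul_cancel₀ _ (hg_pos _ (hy_mem s hs).1.le).ne'] at h1
  have hgyw : ∀ t ∈ Set.Icc t₀ (t₀ + T₁), g (y t) = w t := by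
    intro t ht
    have hsubI : Set.Icc t₀ t ⊆ I := fun s hs => hIccI ⟨hs.1, hs.2.trans ht.2⟩
    have hcont : ContinuousOn (fun s => g (y s) - w s) (Set.Icc t₀ t) := fun s hs =>
      (((hgy_deriv s (hsubI hs)).sub (hw_deriv s (hsubI hs))).continuousAt).continuousWithinAt
    have hder : ∀ s ∈ Set.Ico t₀ t, HasDerivWithinAt (fun s => g (y s) - w s) 0 (Set.Ici s) s := by
      intro s hs
      have h1 := (hgy_deriv s (hsubI ⟨hs.1, hs.2.le⟩)).sub (hw_deriv s (hsubI ⟨hs.1, hs.2.le⟩))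
      rw [sub_self] at h1
      exact h1.hasDerivWithinAt
    have h2 := constant_of_has_deriv_right_zero hcont hder t (Set.right_mem_Icc.2 ht.1)
    have h3 : g (y t₀) - w t₀ = 0 := by
      rw [hy_t₀, hg_α, hw_def]
      simp
    linarith [h2, h3]
  have hint2_deriv : ∀ t ∈ I,
      HasDerivAt (fun u => ∫ s in t₀..u, s * b (y s)) (t * b (y t)) t := fun t ht =>
    intervalIntegral.integral_hasDerivAt_right (hsbb_int t ht)
      ((measurable_id.mul hbb_meas).stronglyMeasurable.stronglyMeasurableAtFilter)
      (continuousAt_id.mul (hbb_contAt t ht))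
  set φ : ℝ → ℝ := fun u =>
    α + β * (u - t₀) + (u * (∫ s in t₀..u, b (y s)) - ∫ s in t₀..u, s * b (y s)) with hφ_def
  have hφ_deriv : ∀ t ∈ I, HasDerivAt φ (w t) t := by
    intro t ht
    have d1 : HasDerivAt (fun u : ℝ => α + β * (u - t₀)) β t := by
      simpa using (((hasDerivAt_id t).sub_const t₀).const_mul β).const_add α
    have d3 : HasDerivAt (fun u => u * ∫ s in t₀..u, b (y s))
        (1 * (∫ s in t₀..t, b (y s)) + t * b (y t)) t :=
      (hasDerivAt_id t).mul (hint_deriv t ht)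
    have h1 := d1.add (d3.sub (hint2_deriv t ht))
    have heq : β + (1 * (∫ s in t₀..t, b (y s)) + t * b (y t) - t * b (y t)) = w t := by
      rw [hw_def]
      ring
    rwa [heq] at h1
  have hφy : ∀ t ∈ Set.Icc t₀ (t₀ + T₁), φ t = y t := by
    intro t ht
    have hsubI : Set.Icc t₀ t ⊆ I := fun s hs => hIccI ⟨hs.1, hs.2.trans ht.2⟩
    have hsubT : Set.Icc t₀ t ⊆ Set.Icc t₀ (t₀ + T₁) := fun s hs => ⟨hs.1, hs.2.trans ht.2⟩
    have hcont : ContinuousOn (fun s => φ s - y s) (Set.Icc t₀ t) := fun s hs =>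
      (((hφ_deriv s (hsubI hs)).sub (hy_deriv s (hsubI hs))).continuousAt).continuousWithinAt
    have hder : ∀ s ∈ Set.Ico t₀ t, HasDerivWithinAt (fun s => φ s - y s) 0 (Set.Ici s) s := by
      intro s hs
      have hsI := hsubI ⟨hs.1, hs.2.le⟩
      have h1 := (hφ_deriv s hsI).sub (hy_deriv s hsI)
      rw [← hgyw s (hsubT ⟨hs.1, hs.2.le⟩), sub_self] at h1
      exact h1.hasDerivWithinAt
    have h2 := constant_of_has_deriv_right_zero hcont hder t (Set.right_mem_Icc.2 ht.1)
    have h3 : φ t₀ - y t₀ = 0 := by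
      rw [hy_t₀, hφ_def]
      simp
    linarith [h2, h3]
  refine ⟨y, fun t ht => (hy_contAt t (hIccI ht)).continuousWithinAt, ?_⟩
  intro t ht
  have htI := hIccI ht
  have hrw : (∫ s in t₀..t, (t - s) * b (y s))
      = t * (∫ s in t₀..t, b (y s)) - ∫ s in t₀..t, s * b (y s) := by
    rw [← intervalIntegral.integral_const_mul, ← intervalIntegral.integral_sub
      ((hbb_int t htI).const_mul t) (hsbb_int t htI)]
    exact intervalIntegral.integral_congr fun s _ => by ring
  rw [hrw, ← hφy t ht]
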